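/- arXiv:2206.00957 — 7 statements merged into one kernel-verified Lean document; each statement's English description precedes it below -/
import Mathlib

section
/- Let J be a metallic structure on a manifold M (J² = pJ + qI with q ≠ 0) and ∇ a linear connection. Then (∇, J) is Codazzi-coupled (i.e., (∇_X J)Y = (∇_Y J)X for all X, Y) if and only if ∇ and the J-conjugate connection ∇^J defined by ∇^J_X Y = J⁻¹(∇_X(JY)) have equal torsion tensors. -/
variable {V : Type*} [AddCommGroup V] [Module ℝ V]

/-- Torsion tensor of a connection `D` with respect to a bracket. -/
def tors (bracket D : V → V → V) (X Y : V) : V := D X Y - D Y X - bracket X Y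

/-- Covariant derivative `(D_X T) Y` of a (1,1)-tensor field `T`. -/
def covT (D : V → V → V) (T : V → V) (X Y : V) : V := D X (T Y) - T (D X Y)

/-- (∇,J) is Codazzi-coupled iff ∇ and the J-conjugate connection
∇^J have equal torsion tensors. -/
theorem codazzi_iff_equal_torsion
    (bracket D : V → V → V) (J : V →ₗ[ℝ] V) (p q : ℝ) (hq : q ≠ 0)
    (hJ2 : ∀ X, J (J X) = p • J X + q • X)
    (Jinv : V → V) (hJinv : ∀ X, Jinv X = q⁻¹ • (J X - p • X))
    (DJ : V → V → V) (hDJ : ∀ X Y, DJ X Y = Jinv (D X (J Y))) :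
    (∀ X Y, covT D (⇑J) X Y = covT D (⇑J) Y X) ↔
      (∀ X Y, tors bracket D X Y = tors bracket DJ X Y) := by
  constructor
  · intro h X Y
    have hc := h X Y
    simp only [covT] at hc
    have hA : D X (J Y) = (D Y (J X) - J (D Y X)) + J (D X Y) :=
      eq_add_of_sub_eq hc
    simp only [tors, hDJ, hJinv, hA, map_add, map_sub, map_smul, hJ2]
    match_scalars <;> field_simp <;> ring
  · intro h X Y
    have ht := h X Y
    simp only [tors, hDJ, hJinv] at ht
    have ht2 : D X Y - D Y X =
        q⁻¹ • (J (D X (J Y)) - p • D X (J Y)) -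
          q⁻¹ • (J (D Y (J X)) - p • D Y (J X)) := sub_left_inj.mp ht
    have ht3 := congrArg (⇑J) ht2
    simp only [map_sub, map_smul, hJ2] at ht3
    simp only [covT]
    have key : J (D X Y) - J (D Y X) = D X (J Y) - D Y (J X) := by
      rw [ht3]
      match_scalars <;> field_simp <;> ring
    linear_combination (norm := abel) key.symm
end

section
/- Let J be a metallic structure on M with J² = pJ + qI, q ≠ 0, and ∇ a linear connection. Then (∇^J, J⁻¹) is Codazzi-coupled if and only if ∇ and ∇^J have equal torsions, where ∇^J_X Y = J⁻¹(∇_X(JY)). -/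
variable {V : Type*} [AddCommGroup V] [Module ℝ V]

/-- (∇^J, J⁻¹) is Codazzi-coupled iff ∇ and ∇^J have equal torsions. -/
theorem codazziInv_iff_equal_torsion
    (bracket D : V → V → V) (J : V →ₗ[ℝ] V) (p q : ℝ) (hq : q ≠ 0)
    (hJ2 : ∀ X, J (J X) = p • J X + q • X)
    (Jinv : V → V) (hJinv : ∀ X, Jinv X = q⁻¹ • (J X - p • X))
    (DJ : V → V → V) (hDJ : ∀ X Y, DJ X Y = Jinv (D X (J Y))) :
    (∀ X Y, covT DJ Jinv X Y = covT DJ Jinv Y X) ↔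
      (∀ X Y, tors bracket D X Y = tors bracket DJ X Y) := by
  have hJJi : ∀ X, J (Jinv X) = X := by
    intro X
    rw [hJinv, map_smul, map_sub, map_smul, hJ2]
    rw [add_sub_cancel_left, smul_smul, inv_mul_cancel₀ hq, one_smul]
  have hsub : ∀ a b, Jinv a - Jinv b = Jinv (a - b) := by
    intro a b
    simp [hJinv, smul_sub, sub_smul]
    abel
  have hinj : ∀ a b, Jinv a = Jinv b → a = b := by
    intro a b h
    have := congrArg J h
    rwa [hJJi, hJJi] at this
  have hcov : ∀ X Y, covT DJ Jinv X Y = Jinv (D X Y - DJ X Y) := by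
    intro X Y
    rw [covT, hDJ X (Jinv Y), hJJi, hsub]
  constructor
  · intro h X Y
    have := h X Y
    rw [hcov, hcov] at this
    have h2 := hinj _ _ this
    simp only [tors]
    rw [sub_left_inj]
    linear_combination (norm := abel) h2
  · intro h X Y
    have := h X Y
    simp only [tors, sub_left_inj] at this
    rw [hcov, hcov]
    congr 1
    linear_combination (norm := abel) this
end

section
/- Let (M, J, g) be a metallic pseudo-Riemannian manifold, G the twin metric, ∇* the g-conjugate and ∇† the G-conjugate of a linear connection ∇. If ∇ is a J-connection (∇J = 0), then both ∇* and ∇† are J-connections. -/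
variable {A : Type*} [CommRing A] [Algebra ℝ A]
variable {V : Type*} [AddCommGroup V] [Module ℝ V] [Module A V] [IsScalarTower ℝ A V]

/-- `covM Dact D h X Y Z = (D_Z h)(X,Y)`, the covariant derivative of a
(0,2)-tensor field `h`, where `Dact` is the action of vector fields on functions. -/
def covM (Dact : V → A → A) (D : V → V → V) (h : V → V → A) (X Y Z : V) : A :=
  Dact Z (h X Y) - h (D Z X) Y - h X (D Z Y)

/-- if ∇ is a J-connection, then the g-conjugate ∇* and the
G-conjugate ∇† are J-connections. -/
theorem conjugates_are_J_connections
    (Dact : V → A → A) (D Ds Dd : V → V → V)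
    (g : V →ₗ[A] V →ₗ[A] A) (J : V →ₗ[A] V) (p q : ℝ)
    (hsym : ∀ X Y, g X Y = g Y X)
    (hJsym : ∀ X Y, g (J X) Y = g X (J Y))
    (hJ2 : ∀ X, J (J X) = p • J X + q • X)
    (hnd : ∀ X, (∀ Y, g X Y = 0) → X = 0)
    (hGnd : ∀ X, (∀ Y, g (J X) Y = 0) → X = 0)
    (hDs : ∀ X Y Z, Dact Z (g X Y) = g (D Z X) Y + g X (Ds Z Y))
    (hDd : ∀ X Y Z, Dact Z (g (J X) Y) = g (J (D Z X)) Y + g (J X) (Dd Z Y))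
    (hJconn : ∀ X Y, D X (J Y) = J (D X Y)) :
    (∀ X Y, Ds X (J Y) = J (Ds X Y)) ∧ (∀ X Y, Dd X (J Y) = J (Dd X Y)) := by
  constructor
  · intro Z Y
    have key : ∀ X : V, g X (Ds Z (J Y)) = g X (J (Ds Z Y)) := by
      intro X
      have h1 := hDs X (J Y) Z
      have h2 := hDs (J X) Y Z
      have e0 : g X (J Y) = g (J X) Y := (hJsym X Y).symm
      rw [e0] at h1
      have e2 : g (D Z X) (J Y) = g (D Z (J X)) Y := by
        rw [hJconn]; exact (hJsym _ _).symm
      have e3 : g (J X) (Ds Z Y) = g X (J (Ds Z Y)) := hJsym _ _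
      linear_combination h2 - h1 - e2 + e3
    have hz : Ds Z (J Y) - J (Ds Z Y) = 0 := by
      apply hnd
      intro W
      have : g (Ds Z (J Y)) W = g (J (Ds Z Y)) W :=
        (hsym _ W).trans ((key W).trans (hsym W _))
      simp only [map_sub, LinearMap.sub_apply, this, sub_self]
    exact sub_eq_zero.mp hz
  · intro Z Y
    have key : ∀ X : V, g (J X) (Dd Z (J Y)) = g (J X) (J (Dd Z Y)) := by
      intro X
      have h1 := hDd X (J Y) Z
      have h2 := hDd (J X) Y Z
      have e0 : g (J (J X)) Y = g (J X) (J Y) := hJsym (J X) Y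
      rw [e0] at h2
      have e2 : g (J (D Z X)) (J Y) = g (J (D Z (J X))) Y := by
        rw [hJconn]; exact (hJsym _ _).symm
      have e3 : g (J (J X)) (Dd Z Y) = g (J X) (J (Dd Z Y)) := hJsym _ _
      linear_combination h2 - h1 - e2 + e3
    have hz : Dd Z (J Y) - J (Dd Z Y) = 0 := by
      apply hGnd
      intro W
      have e1 : g (J (Dd Z (J Y))) W = g (J W) (Dd Z (J Y)) :=
        (hJsym _ _).trans (hsym _ _)
      have e2 : g (J (J (Dd Z Y))) W = g (J W) (J (Dd Z Y)) :=
        (hJsym _ _).trans (hsym _ _)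
      have : g (J (Dd Z (J Y))) W = g (J (J (Dd Z Y))) W := by
        rw [e1, e2]; exact key W
      simp only [map_sub, LinearMap.sub_apply, this, sub_self]
    exact sub_eq_zero.mp hz
end

section
/- Let (M, J, g) be a metallic pseudo-Riemannian manifold and ∇ a torsion-free connection. If ∇J = 0 and (∇, g) is Codazzi-coupled, then Φ_J g = 0. -/
variable {A : Type*} [CommRing A] [Algebra ℝ A]
variable {V : Type*} [AddCommGroup V] [Module ℝ V] [Module A V] [IsScalarTower ℝ A V]

/-- Tachibana operator (Φ_T g)(X,Y,Z) applied to the metric g, where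
(L_X T)Y = [X,TY] − T[X,Y]. -/
def tachi (Dact : V → A → A) (bracket : V → V → V) (g : V → V → A)
    (T : V → V) (X Y Z : V) : A :=
  Dact (T X) (g Y Z) - Dact X (g (T Y) Z)
    + g (bracket Y (T X) - T (bracket Y X)) Z
    + g Y (bracket Z (T X) - T (bracket Z X))

/-- for a torsion-free ∇ with ∇J = 0 and (∇,g) Codazzi-coupled,
Φ_J g = 0. -/
theorem tachibana_vanishes
    (Dact : V → A → A) (bracket D : V → V → V)
    (g : V →ₗ[A] V →ₗ[A] A) (J : V →ₗ[A] V) (p q : ℝ)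
    (hsym : ∀ X Y, g X Y = g Y X)
    (hJsym : ∀ X Y, g (J X) Y = g X (J Y))
    (hJ2 : ∀ X, J (J X) = p • J X + q • X)
    (htf : ∀ X Y, D X Y - D Y X = bracket X Y)
    (hJconn : ∀ X Y, D X (J Y) = J (D X Y))
    -- (∇,g) Codazzi-coupled: (∇_X g)(Y,Z) = (∇_Z g)(X,Y)
    (hCodg : ∀ X Y Z, covM Dact D (fun a b => g a b) Y Z X
      = covM Dact D (fun a b => g a b) X Y Z) :
    ∀ X Y Z, tachi Dact bracket (fun a b => g a b) (⇑J) X Y Z = 0 := by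
  intro X Y Z
  set C : V → V → V → A := fun a b c => covM Dact D (fun x y => g x y) b c a with hC
  have hsym23 : ∀ a b c, C a b c = C a c b := by
    intro a b c
    simp only [hC, covM]
    rw [hsym b c, hsym (D a b) c, hsym b (D a c)]
    ring
  have hcyc : ∀ a b c, C a b c = C c a b := fun a b c => hCodg a b c
  have hJ23 : ∀ a b c, C a (J b) c = C a b (J c) := by
    intro a b c
    simp only [hC, covM, hJconn]
    rw [hJsym b c, hJsym (D a b) c, hJsym b (D a c)]
  have hkey : C (J X) Y Z = C X (J Y) Z := by
    calc C (J X) Y Z = C Z (J X) Y := hcyc (J X) Y Z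
      _ = C Z X (J Y) := hJ23 Z X Y
      _ = C Z (J Y) X := hsym23 Z X (J Y)
      _ = C X (J Y) Z := ((hcyc X (J Y) Z).trans (hsym23 Z X (J Y))).symm
  simp only [hC, covM, hJconn] at hkey
  simp only [tachi, ← htf, hJconn, map_sub, LinearMap.sub_apply, LinearMap.map_sub]
  linear_combination hkey - hJsym Y (D X Z)
end

section
/- Let (M, J, g) be a metallic pseudo-Riemannian manifold and ∇*′ the generalized conjugate connection of ∇ with respect to g by a 1-form τ, defined by X g(Y,Z) = g(∇_X Y, Z) + g(Y, ∇*′_X Z) − τ(X) g(Y,Z). Then ∇ is a J-connection if and only if ∇*′ is a J-connection. Moreover (∇*′)*′ = ∇. -/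
variable {A : Type*} [CommRing A] [Algebra ℝ A]
variable {V : Type*} [AddCommGroup V] [Module ℝ V] [Module A V] [IsScalarTower ℝ A V]

/-- ∇ is a J-connection iff its generalized g-conjugate ∇*′ (by a
1-form τ) is a J-connection; moreover (∇*′)*′ = ∇. -/
theorem generalized_conjugate_J_connection
    (Dact : V → A → A) (D Ds Dss : V → V → V)
    (g : V →ₗ[A] V →ₗ[A] A) (J : V →ₗ[A] V) (p q : ℝ) (tau : V →ₗ[A] A)
    (hsym : ∀ X Y, g X Y = g Y X)
    (hJsym : ∀ X Y, g (J X) Y = g X (J Y))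
    (hJ2 : ∀ X, J (J X) = p • J X + q • X)
    (hnd : ∀ X, (∀ Y, g X Y = 0) → X = 0)
    (hDs : ∀ X Y Z, Dact X (g Y Z) = g (D X Y) Z + g Y (Ds X Z) - tau X * g Y Z)
    (hDss : ∀ X Y Z, Dact X (g Y Z) = g (Ds X Y) Z + g Y (Dss X Z) - tau X * g Y Z) :
    ((∀ X Y, D X (J Y) = J (D X Y)) ↔ (∀ X Y, Ds X (J Y) = J (Ds X Y))) ∧
      (∀ X Y, Dss X Y = D X Y) := by
  have key : ∀ a b : V, (∀ Y, g Y a = g Y b) → a = b := by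
    intro a b h
    have := hnd (a - b) (fun Y => by
      rw [hsym]
      simp [map_sub, h Y])
    exact sub_eq_zero.mp this
  constructor
  · constructor
    · intro hD X Y
      apply key
      intro Z
      have e1 := hDs X Z (J Y)
      have e2 := hDs X (J Z) Y
      have hc : g (D X Z) (J Y) = g (D X (J Z)) Y := by
        rw [hD X Z, hJsym]
      rw [hJsym Z Y] at e2
      rw [show (g Z) (J (Ds X Y)) = (g (J Z)) (Ds X Y) from by rw [hJsym, hsym]]
      linear_combination e2 - e1 - hc
    · intro hDs' X Y
      apply key
      intro Z
      rw [hsym Z (D X (J Y)), hsym Z (J (D X Y)), hJsym]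
      have e1 := hDs X (J Y) Z
      have e2 := hDs X Y (J Z)
      have hc : g (J Y) (Ds X Z) = g Y (Ds X (J Z)) := by
        rw [hJsym, hDs' X Z]
      rw [hJsym Y Z] at e1
      linear_combination e2 - e1 - hc
  · intro X Z
    apply key
    intro Y
    have e1 := hDss X Y Z
    have e2 := hDs X Z Y
    rw [hsym Z Y, hsym (D X Z) Y, hsym Z (Ds X Y)] at e2
    linear_combination e2 - e1
end

section
/- Let (M, J, g) be a metallic pseudo-Riemannian manifold (q ≠ 0) and ∇*′ the generalized conjugate connection of ∇ with respect to g by a 1-form τ. Then ∇*′ is the generalized conjugate connection of ∇^J with respect to the twin metric G by τ, i.e., X G(Y,Z) = G(∇^J_X Y, Z) + G(Y, ∇*′_X Z) − τ(X) G(Y,Z), where ∇^J_X Y = J⁻¹(∇_X(JY)) and G(X,Y) = g(JX,Y). -/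
variable {A : Type*} [CommRing A] [Algebra ℝ A]
variable {V : Type*} [AddCommGroup V] [Module ℝ V] [Module A V] [IsScalarTower ℝ A V]

/-- the generalized g-conjugate ∇*′ of ∇ by τ is the generalized
G-conjugate of ∇^J by τ, where G(X,Y) = g(JX,Y) and ∇^J_X Y = J⁻¹(∇_X(JY)). -/
theorem generalized_conjugate_twin
    (Dact : V → A → A) (D Ds : V → V → V)
    (g : V →ₗ[A] V →ₗ[A] A) (J : V →ₗ[A] V) (p q : ℝ) (hq : q ≠ 0)
    (tau : V →ₗ[A] A)
    (hsym : ∀ X Y, g X Y = g Y X)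
    (hJsym : ∀ X Y, g (J X) Y = g X (J Y))
    (hJ2 : ∀ X, J (J X) = p • J X + q • X)
    (hDs : ∀ X Y Z, Dact X (g Y Z) = g (D X Y) Z + g Y (Ds X Z) - tau X * g Y Z)
    (Jinv : V → V) (hJinv : ∀ X, Jinv X = q⁻¹ • (J X - p • X))
    (DJ : V → V → V) (hDJ : ∀ X Y, DJ X Y = Jinv (D X (J Y))) :
    ∀ X Y Z, Dact X (g (J Y) Z)
      = g (J (DJ X Y)) Z + g (J Y) (Ds X Z) - tau X * g (J Y) Z := by
  have hJJinv : ∀ W, J (Jinv W) = W := by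
    intro W
    rw [hJinv, LinearMap.map_smul_of_tower, map_sub, LinearMap.map_smul_of_tower, hJ2]
    rw [add_sub_cancel_left, smul_smul, inv_mul_cancel₀ hq, one_smul]
  intro X Y Z
  rw [hDJ, hJJinv, hDs]
end

section
/- Let (M, J, g) be a metallic-like pseudo-Riemannian manifold, i.e., g(JX,Y) = g(X, J*Y) with (J*)* = J and J² = pJ + qI. If ∇ is torsion-free, (∇, g) is Codazzi-coupled, ∇J = 0 and ∇J* = 0, then (Φ_{J*} g)(X,Y,Z) = g(Y, (J* − J)∇_X Z), (Φ_J g)(X,Y,Z) = g(Y, (J − J*)∇_X Z), and hence (Φ_{J*} g)(X,Y,Z) + (Φ_J g)(X,Y,Z) = 0. -/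
variable {A : Type*} [CommRing A] [Algebra ℝ A]
variable {V : Type*} [AddCommGroup V] [Module ℝ V] [Module A V] [IsScalarTower ℝ A V]

/-- General key lemma: Tachibana operator for the adjoint `Js` of `J`. -/
theorem tachi_aux
    (Dact : V → A → A) (bracket D : V → V → V)
    (g : V →ₗ[A] V →ₗ[A] A) (J Js : V →ₗ[A] V)
    (hsym : ∀ X Y, g X Y = g Y X)
    (hadj : ∀ X Y, g (J X) Y = g X (Js Y))
    (hadj2 : ∀ X Y, g (Js X) Y = g X (J Y))
    (htf : ∀ X Y, D X Y - D Y X = bracket X Y)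
    (hCodg : ∀ X Y Z, covM Dact D (fun a b => g a b) Y Z X
      = covM Dact D (fun a b => g a b) X Y Z)
    (hJconn : ∀ X Y, D X (J Y) = J (D X Y))
    (hJsconn : ∀ X Y, D X (Js Y) = Js (D X Y)) :
    ∀ X Y Z, tachi Dact bracket (fun a b => g a b) (⇑Js) X Y Z
        = g Y (Js (D X Z) - J (D X Z)) := by
  set C : V → V → V → A := fun a b c => Dact a (g b c) - g (D a b) c - g b (D a c)
    with hC
  have cyc : ∀ a b c, C a b c = C c a b := by
    intro a b c
    have h := hCodg a b c
    simp only [covM] at h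
    simp only [hC]
    exact h
  have sw : ∀ a b c, C a b c = C a c b := by
    intro a b c
    simp only [hC]
    rw [hsym b c, hsym (D a b) c, hsym b (D a c)]
    ring
  have hA : ∀ a b c, C a b (Js c) = C a (J b) c := by
    intro a b c
    simp only [hC]
    rw [← hadj b c, ← hadj (D a b) c, hJconn, hJsconn, ← hadj b (D a c)]
  have hB : ∀ a b c, C a (Js b) c = C a b (J c) := by
    intro a b c
    simp only [hC]
    rw [hadj2 b c, hJsconn, hadj2 (D a b) c, hadj2 b (D a c), hJconn]
  intro X Y Z
  have key : C (Js X) Y Z = C X (Js Y) Z := by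
    rw [cyc, cyc, hA, hB, cyc, cyc]
  simp only [hC] at key
  simp only [tachi, ← htf, hJsconn, map_sub, LinearMap.sub_apply]
  simp only [hJsconn] at key
  have hadj2' := hadj2 Y (D X Z)
  linear_combination key - hadj2'


/-- on a metallic-like pseudo-Riemannian manifold, if ∇ is
torsion-free, (∇,g) is Codazzi-coupled, ∇J = 0 and ∇J* = 0, then
(Φ_{J*} g)(X,Y,Z) = g(Y,(J*−J)∇_X Z), (Φ_J g)(X,Y,Z) = g(Y,(J−J*)∇_X Z), and
their sum vanishes. -/
theorem metallic_like_tachibana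
    (Dact : V → A → A) (bracket D : V → V → V)
    (g : V →ₗ[A] V →ₗ[A] A) (J Js : V →ₗ[A] V) (p q : ℝ)
    (hsym : ∀ X Y, g X Y = g Y X)
    (hadj : ∀ X Y, g (J X) Y = g X (Js Y))
    (hadj2 : ∀ X Y, g (Js X) Y = g X (J Y))
    (hJ2 : ∀ X, J (J X) = p • J X + q • X)
    (htf : ∀ X Y, D X Y - D Y X = bracket X Y)
    (hCodg : ∀ X Y Z, covM Dact D (fun a b => g a b) Y Z X
      = covM Dact D (fun a b => g a b) X Y Z)
    (hJconn : ∀ X Y, D X (J Y) = J (D X Y))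
    (hJsconn : ∀ X Y, D X (Js Y) = Js (D X Y)) :
    (∀ X Y Z, tachi Dact bracket (fun a b => g a b) (⇑Js) X Y Z
        = g Y (Js (D X Z) - J (D X Z))) ∧
      (∀ X Y Z, tachi Dact bracket (fun a b => g a b) (⇑J) X Y Z
        = g Y (J (D X Z) - Js (D X Z))) ∧
      (∀ X Y Z, tachi Dact bracket (fun a b => g a b) (⇑Js) X Y Z
        + tachi Dact bracket (fun a b => g a b) (⇑J) X Y Z = 0) := by
  have h1 := tachi_aux Dact bracket D g J Js hsym hadj hadj2 htf hCodg hJconn hJsconn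
  have h2 := tachi_aux Dact bracket D g Js J hsym hadj2 hadj htf hCodg hJsconn hJconn
  refine ⟨h1, h2, fun X Y Z => ?_⟩
  rw [h1, h2]
  simp only [map_sub]
  ring
end
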